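/- Let |Ψ⟩ = Σ_k μ_k |ψ_k⟩|k⟩ be a Schmidt decomposition of a unit vector in C ⊗ H_B (μ_k ≥ 0), and let Θ be a skew-Hermitian operator on H_S ⊗ H_B (Θ† = −Θ). With ⟨kℓ⟩ := ⟨Ψ|Θ(|ψ_k⟩⊗|ℓ⟩), s_{kℓ} := μ_k²+μ_ℓ², define Tr V := (1/4)[Tr V_1 + Tr V_2 + Tr V_3] where Tr V_1 = −(1/2)Σ_{kℓ} (μ_k³μ_ℓ/s_{kℓ}²)(⟨kℓ⟩⟨ℓk⟩ + c.c.), Tr V_2 = −(1/2)Σ_{kℓ}(μ_k²μ_ℓ²/s_{kℓ}²)|⟨kℓ⟩|², Tr V_3 = −(1/2)Σ_{kℓ}(μ_ℓ⁴/s_{kℓ}²)|⟨kℓ⟩|². Then 0 ≥ Tr V ≥ −((1+√2)/16)·⟨Ψ|Θ†Θ|Ψ⟩ ≥ −((1+√2)/16)·‖Θ†Θ‖. -/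

import Mathlib

set_option maxHeartbeats 1000000

open Matrix
open scoped BigOperators


lemma osqec_key (c x y : ℝ) (hc2 : c^2 = 2) (hc0 : 0 ≤ c) :
    x*y + y^2 ≤ (1+c)/2*(x^2+y^2) := by
  nlinarith [sq_nonneg ((1+c)*x - y), hc2, hc0, sq_nonneg (x-y), sq_nonneg x, sq_nonneg y]

lemma osqec_pair (c x y a b r : ℝ) (hc2 : c^2 = 2) (hc0 : 0 ≤ c)
    (hx : 0 < x) (hy : 0 < y) (ha : 0 ≤ a) (hb : 0 ≤ b) (habs : |r| ≤ a * b) :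
    0 ≤ (x^3*y/(x^2+y^2)^2*(2*r) + x^2*y^2/(x^2+y^2)^2*a^2 + y^4/(x^2+y^2)^2*a^2)
      + (y^3*x/(y^2+x^2)^2*(2*r) + y^2*x^2/(y^2+x^2)^2*b^2 + x^4/(y^2+x^2)^2*b^2)
    ∧ (x^3*y/(x^2+y^2)^2*(2*r) + x^2*y^2/(x^2+y^2)^2*a^2 + y^4/(x^2+y^2)^2*a^2)
      + (y^3*x/(y^2+x^2)^2*(2*r) + y^2*x^2/(y^2+x^2)^2*b^2 + x^4/(y^2+x^2)^2*b^2)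
      ≤ (1+c)/2 * (a^2 + b^2) := by
  have hyx : y^2 + x^2 = x^2 + y^2 := by ring
  rw [hyx]
  have hs2 : (0:ℝ) < (x^2+y^2)^2 := by positivity
  have hrle : r ≤ a*b := le_trans (le_abs_self r) habs
  have hrge : -(a*b) ≤ r := by linarith [abs_le.mp habs]
  have hEeq : (x^3*y/(x^2+y^2)^2*(2*r) + x^2*y^2/(x^2+y^2)^2*a^2 + y^4/(x^2+y^2)^2*a^2)
      + (y^3*x/(x^2+y^2)^2*(2*r) + y^2*x^2/(x^2+y^2)^2*b^2 + x^4/(x^2+y^2)^2*b^2)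
      = (x^3*y*(2*r) + x^2*y^2*a^2 + y^4*a^2
      + y^3*x*(2*r) + y^2*x^2*b^2 + x^4*b^2) / (x^2+y^2)^2 := by
    field_simp; ring
  rw [hEeq]
  constructor
  · apply div_nonneg _ hs2.le
    nlinarith [mul_nonneg (mul_nonneg (mul_nonneg hx.le hy.le)
        (show (0:ℝ) ≤ x^2+y^2 by positivity)) (show 0 ≤ r + a*b by linarith),
      mul_nonneg (show (0:ℝ) ≤ x^2+y^2 by positivity) (sq_nonneg (y*a - x*b))]
  · rw [div_le_iff₀ hs2]
    have key1 : x*y + y^2 ≤ (1+c)/2*(x^2+y^2) := osqec_key c x y hc2 hc0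
    have key2 : y*x + x^2 ≤ (1+c)/2*(x^2+y^2) := by
      have := osqec_key c y x hc2 hc0; linarith
    have h1 : a^2*(x^2+y^2)*(x*y+y^2) ≤ a^2*(x^2+y^2)*((1+c)/2*(x^2+y^2)) :=
      mul_le_mul_of_nonneg_left key1 (by positivity)
    have h2 : b^2*(x^2+y^2)*(y*x+x^2) ≤ b^2*(x^2+y^2)*((1+c)/2*(x^2+y^2)) :=
      mul_le_mul_of_nonneg_left key2 (by positivity)
    have h3 : (x*y*(x^2+y^2))*(2*r) ≤ (x*y*(x^2+y^2))*(a^2+b^2) := by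
      apply mul_le_mul_of_nonneg_left _ (by positivity)
      nlinarith [sq_nonneg (a-b)]
    linarith [h1, h2, h3]

lemma osqec_sums {dB : Type*} [Fintype dB] [DecidableEq dB]
    (μ : dB → ℝ) (av : dB → dB → ℂ) (c : ℝ)
    (hc2 : c^2 = 2) (hc0 : 0 ≤ c) (hμ : ∀ k, 0 ≤ μ k) :
    0 ≤ ((∑ k, ∑ ℓ, (if μ k = 0 ∨ μ ℓ = 0 then (0:ℝ) else
        μ k ^ 3 * μ ℓ / (μ k ^ 2 + μ ℓ ^ 2) ^ 2 * (2 * (av k ℓ * av ℓ k).re)))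
      + (∑ k, ∑ ℓ, (if μ k = 0 ∨ μ ℓ = 0 then (0:ℝ) else
        μ k ^ 2 * μ ℓ ^ 2 / (μ k ^ 2 + μ ℓ ^ 2) ^ 2 * ‖av k ℓ‖ ^ 2))
      + (∑ k, ∑ ℓ, (if μ k = 0 ∨ μ ℓ = 0 then (0:ℝ) else
        μ ℓ ^ 4 / (μ k ^ 2 + μ ℓ ^ 2) ^ 2 * ‖av k ℓ‖ ^ 2))) ∧
    ((∑ k, ∑ ℓ, (if μ k = 0 ∨ μ ℓ = 0 then (0:ℝ) else
        μ k ^ 3 * μ ℓ / (μ k ^ 2 + μ ℓ ^ 2) ^ 2 * (2 * (av k ℓ * av ℓ k).re)))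
      + (∑ k, ∑ ℓ, (if μ k = 0 ∨ μ ℓ = 0 then (0:ℝ) else
        μ k ^ 2 * μ ℓ ^ 2 / (μ k ^ 2 + μ ℓ ^ 2) ^ 2 * ‖av k ℓ‖ ^ 2))
      + (∑ k, ∑ ℓ, (if μ k = 0 ∨ μ ℓ = 0 then (0:ℝ) else
        μ ℓ ^ 4 / (μ k ^ 2 + μ ℓ ^ 2) ^ 2 * ‖av k ℓ‖ ^ 2)))
      ≤ (1+c)/2 * ∑ k, ∑ ℓ, (if μ k = 0 ∨ μ ℓ = 0 then (0:ℝ) else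
          ‖av k ℓ‖ ^ 2) := by
  set F : dB → dB → ℝ := fun k ℓ =>
    (if μ k = 0 ∨ μ ℓ = 0 then (0:ℝ) else
        μ k ^ 3 * μ ℓ / (μ k ^ 2 + μ ℓ ^ 2) ^ 2 * (2 * (av k ℓ * av ℓ k).re))
    + (if μ k = 0 ∨ μ ℓ = 0 then (0:ℝ) else
        μ k ^ 2 * μ ℓ ^ 2 / (μ k ^ 2 + μ ℓ ^ 2) ^ 2 * ‖av k ℓ‖ ^ 2)
    + (if μ k = 0 ∨ μ ℓ = 0 then (0:ℝ) else
        μ ℓ ^ 4 / (μ k ^ 2 + μ ℓ ^ 2) ^ 2 * ‖av k ℓ‖ ^ 2) with hF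
  set B : dB → dB → ℝ := fun k ℓ =>
    if μ k = 0 ∨ μ ℓ = 0 then (0:ℝ) else ‖av k ℓ‖ ^ 2 with hB
  have hFsum : ((∑ k, ∑ ℓ, (if μ k = 0 ∨ μ ℓ = 0 then (0:ℝ) else
        μ k ^ 3 * μ ℓ / (μ k ^ 2 + μ ℓ ^ 2) ^ 2 * (2 * (av k ℓ * av ℓ k).re)))
      + (∑ k, ∑ ℓ, (if μ k = 0 ∨ μ ℓ = 0 then (0:ℝ) else
        μ k ^ 2 * μ ℓ ^ 2 / (μ k ^ 2 + μ ℓ ^ 2) ^ 2 * ‖av k ℓ‖ ^ 2))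
      + (∑ k, ∑ ℓ, (if μ k = 0 ∨ μ ℓ = 0 then (0:ℝ) else
        μ ℓ ^ 4 / (μ k ^ 2 + μ ℓ ^ 2) ^ 2 * ‖av k ℓ‖ ^ 2)))
      = ∑ k, ∑ ℓ, F k ℓ := by
    simp only [hF, Finset.sum_add_distrib]
  rw [hFsum]
  have hswapF : ∑ k, ∑ ℓ, F k ℓ = ∑ k, ∑ ℓ, F ℓ k := Finset.sum_comm
  have hswapB : ∑ k, ∑ ℓ, B k ℓ = ∑ k, ∑ ℓ, B ℓ k := Finset.sum_comm
  have hdouble : (∑ k, ∑ ℓ, F k ℓ) + (∑ k, ∑ ℓ, F k ℓ)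
      = ∑ k, ∑ ℓ, (F k ℓ + F ℓ k) := by
    have h : ∑ k, ∑ ℓ, (F k ℓ + F ℓ k)
        = (∑ k, ∑ ℓ, F k ℓ) + (∑ k, ∑ ℓ, F ℓ k) := by
      simp only [Finset.sum_add_distrib]
    rw [h, ← hswapF]
  have hpt : ∀ k ℓ, 0 ≤ F k ℓ + F ℓ k ∧
      F k ℓ + F ℓ k ≤ (1+c)/2 * (B k ℓ + B ℓ k) := by
    intro k ℓ
    by_cases h : μ k = 0 ∨ μ ℓ = 0
    · have h' : μ ℓ = 0 ∨ μ k = 0 := h.symm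
      simp [hF, hB, h, h', le_refl]
    · have h' : ¬ (μ ℓ = 0 ∨ μ k = 0) := fun hh => h hh.symm
      push_neg at h
      obtain ⟨hk, hℓ⟩ := h
      have h'' : ¬ (μ k = 0 ∨ μ ℓ = 0) := by tauto
      simp only [hF, hB, if_neg h', if_neg h'']
      have hmc : (av ℓ k * av k ℓ).re = (av k ℓ * av ℓ k).re := by rw [mul_comm]
      rw [hmc]
      have hx : 0 < μ k := lt_of_le_of_ne (hμ k) (Ne.symm hk)
      have hy : 0 < μ ℓ := lt_of_le_of_ne (hμ ℓ) (Ne.symm hℓ)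
      have habs : |(av k ℓ * av ℓ k).re| ≤ ‖av k ℓ‖ * ‖av ℓ k‖ := by
        rw [← norm_mul]; exact Complex.abs_re_le_norm _
      have H := osqec_pair c (μ k) (μ ℓ) (‖av k ℓ‖) (‖av ℓ k‖)
        ((av k ℓ * av ℓ k).re) hc2 hc0 hx hy (norm_nonneg _) (norm_nonneg _) habs
      constructor
      · have := H.1; linarith
      · have := H.2; linarith
  constructor
  · have h0 : 0 ≤ ∑ k, ∑ ℓ, (F k ℓ + F ℓ k) :=
      Finset.sum_nonneg fun k _ => Finset.sum_nonneg fun ℓ _ => (hpt k ℓ).1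
    rw [← hdouble] at h0; linarith
  · have hle : ∑ k, ∑ ℓ, (F k ℓ + F ℓ k) ≤ ∑ k, ∑ ℓ, ((1+c)/2 * (B k ℓ + B ℓ k)) :=
      Finset.sum_le_sum fun k _ => Finset.sum_le_sum fun ℓ _ => (hpt k ℓ).2
    have hBsum : ∑ k, ∑ ℓ, ((1+c)/2 * (B k ℓ + B ℓ k))
        = (1+c)/2 * ((∑ k, ∑ ℓ, B k ℓ) + (∑ k, ∑ ℓ, B ℓ k)) := by
      simp only [Finset.mul_sum, mul_add, Finset.sum_add_distrib]
    rw [hBsum, ← hswapB] at hle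
    rw [← hdouble] at hle
    linarith

lemma inner_equiv_symm_aux {ι : Type*} [Fintype ι] (x y : ι → ℂ) :
    inner ℂ ((WithLp.equiv 2 (ι → ℂ)).symm x : EuclideanSpace ℂ ι) ((WithLp.equiv 2 (ι → ℂ)).symm y)
      = star x ⬝ᵥ y := by
  rw [dotProduct_comm]; rfl

/-- The central estimate on the second-order trace contribution `Tr V` in the
approximate OSQEC bound: `0 ≥ Tr V ≥ −((1+√2)/16)⟨Ψ|Θ†Θ|Ψ⟩ ≥ −((1+√2)/16)‖Θ†Θ‖`. -/
theorem stmt_14 {dS dB : ℕ}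
    (ψ : Fin dB → (Fin dS → ℂ)) (μ : Fin dB → ℝ)
    (hμ : ∀ k, 0 ≤ μ k) (hnorm : ∑ k, μ k ^ 2 = 1)
    (hortho : ∀ k ℓ, μ k ≠ 0 → μ ℓ ≠ 0 →
      star (ψ k) ⬝ᵥ ψ ℓ = if k = ℓ then 1 else 0)
    (Θ : Matrix (Fin dS × Fin dB) (Fin dS × Fin dB) ℂ)
    (hΘ : Θᴴ = -Θ)
    (Ψ : Fin dS × Fin dB → ℂ) (hΨ : ∀ p, Ψ p = (μ p.2 : ℂ) * ψ p.2 p.1)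
    (av : Fin dB → Fin dB → ℂ)
    (hav : ∀ k ℓ, av k ℓ =
      star Ψ ⬝ᵥ Θ.mulVec (fun p => if p.2 = ℓ then ψ k p.1 else 0))
    (T1 T2 T3 TV : ℝ)
    (hT1 : T1 = -(1/2) * ∑ k, ∑ ℓ, (if μ k = 0 ∨ μ ℓ = 0 then 0 else
      μ k ^ 3 * μ ℓ / (μ k ^ 2 + μ ℓ ^ 2) ^ 2 * (2 * (av k ℓ * av ℓ k).re)))
    (hT2 : T2 = -(1/2) * ∑ k, ∑ ℓ, (if μ k = 0 ∨ μ ℓ = 0 then 0 else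
      μ k ^ 2 * μ ℓ ^ 2 / (μ k ^ 2 + μ ℓ ^ 2) ^ 2 * ‖av k ℓ‖ ^ 2))
    (hT3 : T3 = -(1/2) * ∑ k, ∑ ℓ, (if μ k = 0 ∨ μ ℓ = 0 then 0 else
      μ ℓ ^ 4 / (μ k ^ 2 + μ ℓ ^ 2) ^ 2 * ‖av k ℓ‖ ^ 2))
    (hTV : TV = (1/4) * (T1 + T2 + T3)) :
    TV ≤ 0 ∧
    -((1 + Real.sqrt 2) / 16) * (star Ψ ⬝ᵥ (Θᴴ * Θ).mulVec Ψ).re ≤ TV ∧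
    (star Ψ ⬝ᵥ (Θᴴ * Θ).mulVec Ψ).re
      ≤ ‖Matrix.toEuclideanCLM (𝕜 := ℂ) (Θᴴ * Θ)‖ := by
  classical
  set w : Fin dS × Fin dB → ℂ := Θ.mulVec Ψ with hw
  -- Q as sum of |w|²
  have hQdot : star Ψ ⬝ᵥ (Θᴴ * Θ).mulVec Ψ = star w ⬝ᵥ w := by
    rw [← Matrix.mulVec_mulVec, dotProduct_mulVec, ← Matrix.star_mulVec, hw]
  have hQre : (star Ψ ⬝ᵥ (Θᴴ * Θ).mulVec Ψ).re = ∑ p, ‖w p‖ ^ 2 := by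
    rw [hQdot]
    simp only [dotProduct, Pi.star_apply, Complex.re_sum]
    congr 1; funext p
    rw [← Complex.normSq_eq_norm_sq]
    simp [Complex.star_def, Complex.mul_re, Complex.normSq_apply]
  -- av in terms of w
  have hvm : star Ψ ᵥ* Θ = -star w := by
    rw [hw, Matrix.star_mulVec, hΘ, Matrix.vecMul_neg, neg_neg]
  have hav2 : ∀ k ℓ, av k ℓ = -∑ i, (starRingEnd ℂ) (w (i, ℓ)) * ψ k i := by
    intro k ℓ
    rw [hav, dotProduct_mulVec, hvm, neg_dotProduct, neg_inj]
    rw [dotProduct, Fintype.sum_prod_type]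
    simp [mul_ite]
  -- Bessel
  have hbessel : ∀ ℓ : Fin dB, μ ℓ ≠ 0 →
      (∑ k, if μ k = 0 ∨ μ ℓ = 0 then (0:ℝ) else ‖av k ℓ‖ ^ 2)
        ≤ ∑ i, ‖w (i, ℓ)‖ ^ 2 := by
    intro ℓ hℓ
    set v : {k : Fin dB // μ k ≠ 0} → EuclideanSpace ℂ (Fin dS) :=
      fun k => (WithLp.equiv 2 _).symm (ψ k) with hv
    have hON : Orthonormal ℂ v := by
      rw [orthonormal_iff_ite]
      intro j k
      rw [hv]
      simp only []
      rw [inner_equiv_symm_aux, hortho j k j.2 k.2]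
      simp [Subtype.ext_iff]
    set u : EuclideanSpace ℂ (Fin dS) := (WithLp.equiv 2 _).symm (fun i => w (i, ℓ)) with hu
    have hb := hON.sum_inner_products_le (s := Finset.univ) u
    have habs : ∀ k : {k : Fin dB // μ k ≠ 0},
        ‖av (k : Fin dB) ℓ‖ ^ 2 = ‖(inner ℂ (v k) u)‖ ^ 2 := by
      intro k
      have hi : (inner ℂ (v k) u) = ∑ i, (starRingEnd ℂ) (ψ k i) * w (i, ℓ) := by
        rw [hv, hu]
        simp only []
        rw [inner_equiv_symm_aux]
        rfl
      have h2 : av (k : Fin dB) ℓ = -(starRingEnd ℂ) (inner ℂ (v k) u) := by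
        rw [hi, hav2, map_sum, neg_inj]
        exact Finset.sum_congr rfl fun i _ => by
          rw [_root_.map_mul, Complex.conj_conj]; ring
      rw [h2, norm_neg, RCLike.norm_conj]
    have hun : ‖u‖ ^ 2 = ∑ i, ‖w (i, ℓ)‖ ^ 2 := by
      rw [EuclideanSpace.norm_eq, Real.sq_sqrt (by positivity)]
      simp [hu]
    have hconv : (∑ k, if μ k = 0 ∨ μ ℓ = 0 then (0:ℝ) else ‖av k ℓ‖ ^ 2)
        = ∑ k : {k : Fin dB // μ k ≠ 0}, ‖av (k : Fin dB) ℓ‖ ^ 2 := by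
      rw [← Finset.sum_subtype (Finset.univ.filter (fun k => μ k ≠ 0))
        (by simp) (fun k => ‖av k ℓ‖ ^ 2)]
      rw [Finset.sum_filter]
      congr 1; funext k
      by_cases h : μ k = 0 <;> simp [h, hℓ]
    rw [hconv, hun.symm] at *
    calc ∑ k : {k : Fin dB // μ k ≠ 0}, ‖av (k : Fin dB) ℓ‖ ^ 2
        = ∑ k : {k : Fin dB // μ k ≠ 0}, ‖(inner ℂ (v k) u)‖ ^ 2 := by
          exact Finset.sum_congr rfl fun k _ => habs k
      _ ≤ ‖u‖ ^ 2 := hb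
  -- A ≤ Q
  have hAQ : (∑ k, ∑ ℓ, if μ k = 0 ∨ μ ℓ = 0 then (0:ℝ) else ‖av k ℓ‖ ^ 2)
      ≤ (star Ψ ⬝ᵥ (Θᴴ * Θ).mulVec Ψ).re := by
    rw [hQre, Fintype.sum_prod_type]
    have hR : (∑ i : Fin dS, ∑ ℓ : Fin dB, ‖w (i, ℓ)‖ ^ 2)
        = ∑ ℓ : Fin dB, ∑ i : Fin dS, ‖w (i, ℓ)‖ ^ 2 := Finset.sum_comm
    have hL : (∑ k, ∑ ℓ, if μ k = 0 ∨ μ ℓ = 0 then (0:ℝ) else ‖av k ℓ‖ ^ 2)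
        = ∑ ℓ, ∑ k, if μ k = 0 ∨ μ ℓ = 0 then (0:ℝ) else ‖av k ℓ‖ ^ 2 :=
      Finset.sum_comm
    rw [hR, hL]
    apply Finset.sum_le_sum
    intro ℓ _
    by_cases hℓ : μ ℓ = 0
    · simp only [hℓ, or_true, if_true, Finset.sum_const, smul_zero]
      positivity
    · exact hbessel ℓ hℓ
  -- norm part
  have hψnorm : ∀ ℓ, μ ℓ ≠ 0 → ∑ i, ‖ψ ℓ i‖ ^ 2 = 1 := by
    intro ℓ hℓ
    have h := hortho ℓ ℓ hℓ hℓ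
    rw [if_pos rfl] at h
    have hre := congrArg Complex.re h
    rw [dotProduct] at hre
    simp only [Complex.re_sum, Pi.star_apply, Complex.star_def, Complex.mul_re,
      Complex.conj_re, Complex.conj_im, Complex.one_re] at hre
    rw [← hre]
    apply Finset.sum_congr rfl
    intro i _
    rw [Complex.sq_norm, Complex.normSq_apply]
    ring
  set Ψ' : EuclideanSpace ℂ (Fin dS × Fin dB) := (WithLp.equiv 2 _).symm Ψ with hΨ'
  have hΨnorm2 : ‖Ψ'‖ ^ 2 = 1 := by
    rw [EuclideanSpace.norm_eq, Real.sq_sqrt (by positivity)]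
    have : ∀ p : Fin dS × Fin dB, ‖Ψ' p‖ ^ 2 = μ p.2 ^ 2 * ‖ψ p.2 p.1‖ ^ 2 := by
      intro p
      have : Ψ' p = Ψ p := rfl
      rw [this, hΨ p, norm_mul, mul_pow, Complex.norm_real, Real.norm_eq_abs, sq_abs]
    simp only [this]
    rw [Fintype.sum_prod_type, Finset.sum_comm]
    rw [← hnorm]
    apply Finset.sum_congr rfl
    intro ℓ _
    by_cases hℓ : μ ℓ = 0
    · simp [hℓ]
    · have heq : ∀ i : Fin dS, μ (i, ℓ).2 ^ 2 * ‖ψ (i, ℓ).2 (i, ℓ).1‖ ^ 2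
          = μ ℓ ^ 2 * ‖ψ ℓ i‖ ^ 2 := fun i => rfl
      simp only [heq]
      rw [← Finset.mul_sum, hψnorm ℓ hℓ, mul_one]
  have hΨnorm : ‖Ψ'‖ = 1 := by
    rw [← Real.sqrt_sq (norm_nonneg Ψ'), hΨnorm2, Real.sqrt_one]
  have hQnorm : (star Ψ ⬝ᵥ (Θᴴ * Θ).mulVec Ψ).re
      ≤ ‖Matrix.toEuclideanCLM (𝕜 := ℂ) (Θᴴ * Θ)‖ := by
    set M := Θᴴ * Θ with hM
    set T := Matrix.toEuclideanCLM (𝕜 := ℂ) M with hT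
    have hMΨ : T Ψ' = (WithLp.equiv 2 _).symm (M.mulVec Ψ) := by
      rw [hT, hΨ']
      rfl
    have hinner : (inner ℂ Ψ' (T Ψ')) = star Ψ ⬝ᵥ M.mulVec Ψ := by
      rw [hMΨ, hΨ', inner_equiv_symm_aux]
    calc (star Ψ ⬝ᵥ M.mulVec Ψ).re = (inner ℂ Ψ' (T Ψ')).re := by rw [hinner]
      _ ≤ ‖inner ℂ Ψ' (T Ψ')‖ := Complex.re_le_norm _
      _ = ‖(inner ℂ Ψ' (T Ψ'))‖ := rfl
      _ ≤ ‖Ψ'‖ * ‖T Ψ'‖ := norm_inner_le_norm _ _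
      _ ≤ ‖Ψ'‖ * (‖T‖ * ‖Ψ'‖) := by
          gcongr
          exact T.le_opNorm Ψ'
      _ = ‖T‖ := by rw [hΨnorm]; ring
    -- assemble
  have hc2 : (Real.sqrt 2) ^ 2 = 2 := Real.sq_sqrt (by norm_num)
  have hc0 : (0:ℝ) ≤ Real.sqrt 2 := Real.sqrt_nonneg 2
  obtain ⟨hS0, hSle⟩ := osqec_sums μ av (Real.sqrt 2) hc2 hc0 hμ
  have h16 : (0:ℝ) ≤ (1 + Real.sqrt 2) / 16 := by linarith
  have hmul := mul_le_mul_of_nonneg_left hAQ h16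
  refine ⟨by linarith, by linarith, hQnorm⟩
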